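/- Let d ≥ 2 and let ‖·‖_X and ‖·‖_Y be symmetric norms on ℝ^d (invariant under permutations of coordinates and sign changes) with ‖e_i‖_X = ‖e_i‖_Y = 1 for the standard basis vectors. Set λ_X(ℓ) := ‖∑_{i=1}^ℓ e_i‖_X and λ_Y(ℓ) := ‖∑_{i=1}^ℓ e_i‖_Y. Then for all natural numbers k ≥ 2d + ⌈log₂ d⌉ − 1, the entropy numbers satisfy e_k(S_X, B_Y) ≥ (1/e) · 2^{−k/(d−1)} · λ_Y(d−1)/λ_X(d−1), where S_X = {x : ‖x‖_X = 1} and B_Y = {x : ‖x‖_Y ≤ 1}. -/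

import Mathlib

open scoped Pointwise BigOperators

/-- A symmetric norm on `ℝ^d`: a norm invariant under permutations of coordinates and under
sign changes. -/
def IsSymmNorm {d : ℕ} (f : (Fin d → ℝ) → ℝ) : Prop :=
  (∀ x, 0 ≤ f x) ∧ (∀ x, f x = 0 ↔ x = 0) ∧
  (∀ (l : ℝ) (x), f (l • x) = |l| * f x) ∧
  (∀ x y, f (x + y) ≤ f x + f y) ∧
  (∀ (π : Equiv.Perm (Fin d)) (ε : Fin d → ℝ), (∀ i, ε i = 1 ∨ ε i = -1) →
    ∀ x : Fin d → ℝ, f (fun i => ε i * x (π i)) = f x)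

/-- `λ_E(ℓ) = ‖∑_{i=1}^ℓ e_i‖_E`, the norm of the sum of the first `ℓ` standard basis
vectors. -/
noncomputable def lam {d : ℕ} (f : (Fin d → ℝ) → ℝ) (l : ℕ) : ℝ :=
  f (fun i => if (i : ℕ) < l then 1 else 0)

/-- The `k`-th (dyadic) entropy number of `K` with respect to the "unit ball" `B`:
the infimum of all `ε > 0` such that `K` can be covered by `2^(k-1)` translates of `ε • B`. -/
noncomputable def entropyNumber {d : ℕ} (K B : Set (Fin d → ℝ)) (k : ℕ) : ℝ :=
  sInf {ε : ℝ | 0 < ε ∧ ∃ c : Fin (2 ^ (k - 1)) → (Fin d → ℝ),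
    K ⊆ ⋃ j, (c j +ᵥ ε • B)}

section helpers

variable {d : ℕ} {f : (Fin d → ℝ) → ℝ}

lemma symm_zero (hf : IsSymmNorm f) : f 0 = 0 := (hf.2.1 0).mpr rfl

lemma symm_absSign (hf : IsSymmNorm f) (π : Equiv.Perm (Fin d)) (x : Fin d → ℝ) :
    f (fun i => |x (π i)|) = f x := by
  have h := hf.2.2.2.2 π (fun i => if x (π i) < 0 then -1 else 1)
    (fun i => by by_cases hc : x (π i) < 0 <;> simp [hc]) x
  rw [← h]
  congr 1
  funext i
  by_cases hneg : x (π i) < 0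
  · simp only [if_pos hneg, neg_one_mul, abs_of_neg hneg]
  · simp only [if_neg hneg, one_mul, abs_of_nonneg (not_lt.mp hneg)]

lemma symm_abs (hf : IsSymmNorm f) (x : Fin d → ℝ) :
    f (fun i => |x i|) = f x := symm_absSign hf 1 x

lemma symm_perm (hf : IsSymmNorm f) (π : Equiv.Perm (Fin d)) (x : Fin d → ℝ) :
    f (fun i => x (π i)) = f x := by
  have h := hf.2.2.2.2 π (fun _ => 1) (fun i => Or.inl rfl) x
  simpa using h

lemma symm_neg (hf : IsSymmNorm f) (x : Fin d → ℝ) : f (-x) = f x := by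
  have := hf.2.2.1 (-1) x
  simpa using this

lemma symm_flip_eq (hf : IsSymmNorm f) (x : Fin d → ℝ) (i : Fin d) :
    f (fun i' => if i' = i then -x i' else x i') = f x := by
  have h := hf.2.2.2.2 1 (fun i' => if i' = i then (-1 : ℝ) else 1)
    (fun i' => by by_cases hc : i' = i <;> simp [hc]) x
  rw [← h]
  congr 1
  funext i'
  by_cases hc : i' = i <;> simp [hc]

lemma symm_update_le (hf : IsSymmNorm f) (x : Fin d → ℝ) (i : Fin d) (t : ℝ)
    (ht : |t| ≤ |x i|) : f (Function.update x i t) ≤ f x := by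
  by_cases hc : x i = 0
  · have h0 : t = 0 := by rw [hc, abs_zero] at ht; exact abs_nonpos_iff.mp ht
    rw [h0, ← hc, Function.update_eq_self]
  · obtain ⟨a, ha⟩ : ∃ a : ℝ, a = (1 + t / x i) / 2 := ⟨_, rfl⟩
    obtain ⟨b, hb⟩ : ∃ b : ℝ, b = (1 - t / x i) / 2 := ⟨_, rfl⟩
    have htc : |t / x i| ≤ 1 := by
      rw [abs_div]; exact div_le_one_of_le₀ ht (abs_nonneg _)
    have htc' : -1 ≤ t / x i ∧ t / x i ≤ 1 := abs_le.mp htc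
    have ha0 : 0 ≤ a := by rw [ha]; linarith [htc'.1]
    have hb0 : 0 ≤ b := by rw [hb]; linarith [htc'.2]
    have hab : a + b = 1 := by rw [ha, hb]; ring
    obtain ⟨z, hz⟩ : ∃ z : Fin d → ℝ, z = fun i' => if i' = i then -x i' else x i' := ⟨_, rfl⟩
    have hfz : f z = f x := by rw [hz]; exact symm_flip_eq hf x i
    have key : Function.update x i t = a • x + b • z := by
      funext i'
      by_cases hii : i' = i
      · subst hii
        simp only [Function.update_self, Pi.add_apply, Pi.smul_apply, smul_eq_mul, hz,
          if_pos rfl, if_true]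
        rw [ha, hb]
        field_simp
        ring
      · simp only [Function.update_of_ne hii, Pi.add_apply, Pi.smul_apply, smul_eq_mul, hz,
          if_neg hii]
        rw [← add_mul, hab, one_mul]
    calc f (Function.update x i t) = f (a • x + b • z) := by rw [key]
      _ ≤ f (a • x) + f (b • z) := hf.2.2.2.1 _ _
      _ = |a| * f x + |b| * f z := by rw [hf.2.2.1, hf.2.2.1]
      _ = a * f x + b * f x := by rw [abs_of_nonneg ha0, abs_of_nonneg hb0, hfz]
      _ = f x := by rw [← add_mul, hab, one_mul]

lemma symm_mono (hf : IsSymmNorm f) {x z : Fin d → ℝ} (h : ∀ i, |x i| ≤ |z i|) :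
    f x ≤ f z := by
  have key : ∀ s : Finset (Fin d), f (fun i => if i ∈ s then x i else z i) ≤ f z := by
    intro s
    induction s using Finset.induction_on with
    | empty => simp
    | @insert a s ha ih =>
      have heq : (fun i => if i ∈ insert a s then x i else z i) =
          Function.update (fun i => if i ∈ s then x i else z i) a (x a) := by
        funext i
        by_cases hia : i = a
        · subst hia; simp
        · rw [Function.update_of_ne hia]
          simp [Finset.mem_insert, hia]
      rw [heq]
      refine le_trans (symm_update_le hf _ a (x a) ?_) ih
      simpa [ha] using h a
  have := key Finset.univ
  simpa using this

lemma symm_single (hf : IsSymmNorm f) (hfe : ∀ i : Fin d, f (Pi.single i 1) = 1)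
    (i : Fin d) (t : ℝ) : f (Pi.single i t) = |t| := by
  have h2 : (Pi.single i t : Fin d → ℝ) = t • (Pi.single i 1 : Fin d → ℝ) := by
    funext j
    by_cases hj : j = i
    · subst hj; simp
    · simp [Pi.single_apply, hj]
  rw [h2, hf.2.2.1, hfe i, mul_one]

lemma symm_coord_le (hf : IsSymmNorm f) (hfe : ∀ i : Fin d, f (Pi.single i 1) = 1)
    (x : Fin d → ℝ) (i : Fin d) : |x i| ≤ f x := by
  have h1 : f (Pi.single i (x i)) ≤ f x := by
    apply symm_mono hf
    intro j
    by_cases hj : j = i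
    · subst hj; simp
    · rw [Pi.single_apply, if_neg (fun h => hj h)]
      simp [abs_nonneg]
  rwa [symm_single hf hfe] at h1

lemma symm_sum_le {α : Type*} (hf : IsSymmNorm f) (s : Finset α) (g : α → Fin d → ℝ) :
    f (∑ i ∈ s, g i) ≤ ∑ i ∈ s, f (g i) := by
  classical
  induction s using Finset.induction_on with
  | empty => simp [symm_zero hf]
  | @insert a s ha ih =>
    rw [Finset.sum_insert ha, Finset.sum_insert ha]
    exact le_trans (hf.2.2.2.1 _ _) (by linarith)

lemma symm_le_sum_abs (hf : IsSymmNorm f) (hfe : ∀ i : Fin d, f (Pi.single i 1) = 1)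
    (x : Fin d → ℝ) : f x ≤ ∑ i, |x i| := by
  calc f x = f (∑ i, Pi.single i (x i)) := by rw [Finset.univ_sum_single]
    _ ≤ ∑ i, f (Pi.single i (x i)) := symm_sum_le hf _ _
    _ = ∑ i, |x i| := Finset.sum_congr rfl fun i _ => symm_single hf hfe i (x i)

end helpers

section part2
open Fin.NatCast
variable {d : ℕ} {f : (Fin d → ℝ) → ℝ}

lemma finRotate_pow_apply (m : ℕ) (j : ℕ) (t : Fin (m + 1)) :
    ((finRotate (m + 1)) ^ j) t = t + (j : Fin (m + 1)) := by
  induction j generalizing t with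
  | zero => simp
  | succ j ih =>
    rw [pow_succ]
    show ((finRotate (m+1)) ^ j) (finRotate (m+1) t) = _
    rw [finRotate_succ_apply, ih (t + 1)]
    push_cast
    abel

lemma lam_ge_one (hf : IsSymmNorm f) (hfe : ∀ i : Fin d, f (Pi.single i 1) = 1)
    {l : ℕ} (hl : 0 < l) (hld : l ≤ d) : 1 ≤ lam f l := by
  have h := symm_coord_le hf hfe (fun i => if (i : ℕ) < l then 1 else 0)
    ⟨0, lt_of_lt_of_le hl hld⟩
  simpa [lam, hl] using h

lemma symm_l1_lower (hf : IsSymmNorm f) {m : ℕ} (hm : m + 1 ≤ d) (y : Fin d → ℝ)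
    (hy : ∀ i : Fin d, ¬((i : ℕ) < m + 1) → y i = 0) :
    lam f (m + 1) * ∑ i, |y i| ≤ ((m : ℝ) + 1) * f y := by
  classical
  set S : ℝ := ∑ i, |y i| with hSdef
  have hS0 : 0 ≤ S := Finset.sum_nonneg fun i _ => abs_nonneg _
  set p : Fin d → Prop := fun i => (i : ℕ) < m + 1 with hp
  have hpd : DecidablePred p := fun i => by rw [hp]; infer_instance
  let e : Fin (m + 1) ≃ {i : Fin d // p i} :=
    { toFun := fun t => ⟨⟨t.1, lt_of_lt_of_le t.2 hm⟩, t.2⟩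
      invFun := fun q => ⟨q.1.1, q.2⟩
      left_inv := fun t => rfl
      right_inv := fun q => rfl }
  let π : Fin (m + 1) → Equiv.Perm (Fin d) :=
    fun j => Equiv.Perm.extendDomain ((finRotate (m + 1)) ^ (j : ℕ)) e
  have hsum : ∀ i : Fin d, (∑ j : Fin (m + 1), |y ((π j) i)|) = if (i : ℕ) < m + 1 then S else 0 := by
    intro i
    by_cases h : (i : ℕ) < m + 1
    · rw [if_pos h]
      have happ : ∀ j : Fin (m + 1),
          (π j) i = ((e ((e.symm ⟨i, h⟩) + j)) : Fin d) := by
        intro j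
        have := Equiv.Perm.extendDomain_apply_subtype
          ((finRotate (m + 1)) ^ (j : ℕ)) e (h : p i)
        rw [this, finRotate_pow_apply, Fin.cast_val_eq_self]
      calc (∑ j : Fin (m + 1), |y ((π j) i)|)
          = ∑ j : Fin (m + 1), |y ((e ((e.symm ⟨i, h⟩) + j)) : Fin d)| :=
            Finset.sum_congr rfl fun j _ => by rw [happ j]
        _ = ∑ t : Fin (m + 1), |y ((e t : {i : Fin d // p i}) : Fin d)| :=
            Fintype.sum_bijective (Equiv.addLeft (e.symm ⟨i, h⟩))
              (Equiv.bijective _) _ _ (fun j => rfl)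
        _ = ∑ q : {i : Fin d // p i}, |y (q : Fin d)| :=
            Fintype.sum_equiv e _ _ (fun t => rfl)
        _ = ∑ i ∈ Finset.univ.filter p, |y i| :=
            (Finset.sum_subtype (Finset.univ.filter p) (by simp) (fun i => |y i|)).symm
        _ = S := by
            rw [hSdef, ← Finset.sum_filter_add_sum_filter_not Finset.univ p (fun i => |y i|)]
            have : ∑ i ∈ Finset.univ.filter (fun i => ¬ p i), |y i| = 0 :=
              Finset.sum_eq_zero fun i hi => by
                rw [hy i (Finset.mem_filter.mp hi).2, abs_zero]
            rw [this, add_zero]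
    · rw [if_neg h]
      refine Finset.sum_eq_zero fun j _ => ?_
      have : (π j) i = i := Equiv.Perm.extendDomain_apply_not_subtype _ e h
      rw [this, hy i h, abs_zero]
  set u : Fin d → ℝ := fun i => if (i : ℕ) < m + 1 then S / (m + 1) else 0 with hu
  have hfu : f u = (S / (m + 1)) * lam f (m + 1) := by
    have : u = (S / (m + 1)) • (fun i : Fin d => if (i : ℕ) < m + 1 then (1 : ℝ) else 0) := by
      funext i
      simp only [hu, Pi.smul_apply, smul_eq_mul, mul_ite, mul_one, mul_zero]
    rw [this, hf.2.2.1]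
    rw [abs_of_nonneg (by positivity)]
    rw [lam]
    refine congrArg _ (congrArg f (funext fun i => ?_))
    by_cases h : (i : ℕ) < m + 1 <;> simp [h]
  have hMu : ((m : ℝ) + 1) • u = ∑ j : Fin (m + 1), (fun i => |y ((π j) i)|) := by
    funext i
    rw [Finset.sum_apply]
    simp only [Pi.smul_apply, smul_eq_mul, hu]
    rw [hsum i]
    by_cases h : (i : ℕ) < m + 1
    · rw [if_pos h, if_pos h, mul_div_cancel₀]
      positivity
    · rw [if_neg h, if_neg h, mul_zero]
  have hle : f (((m : ℝ) + 1) • u) ≤ ((m : ℝ) + 1) * f y := by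
    rw [hMu]
    calc f (∑ j : Fin (m + 1), (fun i => |y ((π j) i)|))
        ≤ ∑ j : Fin (m + 1), f (fun i => |y ((π j) i)|) := symm_sum_le hf _ _
      _ = ∑ _j : Fin (m + 1), f y :=
          Finset.sum_congr rfl fun j _ => symm_absSign hf (π j) y
      _ = ((m : ℝ) + 1) * f y := by
          rw [Finset.sum_const, Finset.card_univ, Fintype.card_fin, nsmul_eq_mul]
          push_cast
          ring
  rw [hf.2.2.1, hfu, abs_of_nonneg (by positivity : (0:ℝ) ≤ (m : ℝ) + 1)] at hle
  have hm1 : ((m : ℝ) + 1) ≠ 0 := by positivity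
  calc lam f (m + 1) * S = ((m : ℝ) + 1) * ((S / (m + 1)) * lam f (m + 1)) := by
        field_simp
    _ ≤ ((m : ℝ) + 1) * f y := hle

lemma exists_on_sphere (hf : IsSymmNorm f) (hfe : ∀ i : Fin d, f (Pi.single i 1) = 1)
    (y : Fin d → ℝ) (i0 : Fin d) (hy0 : y i0 = 0) (h1 : f y ≤ 1) :
    ∃ s : ℝ, f (Function.update y i0 s) = 1 := by
  set g : ℝ → ℝ := fun s => f (Function.update y i0 s) with hg
  have hdiff : ∀ s s' : ℝ,
      Function.update y i0 s - Function.update y i0 s' = Pi.single i0 (s - s') := by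
    intro s s'
    funext i
    by_cases hi : i = i0
    · subst hi; simp
    · simp [Function.update_of_ne hi, Pi.single_apply, hi]
  have hlip : LipschitzWith 1 g := by
    apply LipschitzWith.of_dist_le_mul
    intro s s'
    rw [Real.dist_eq, Real.dist_eq, NNReal.coe_one, one_mul]
    have hle : ∀ a b : ℝ, g a - g b ≤ |a - b| := by
      intro a b
      have h := hf.2.2.2.1 (Function.update y i0 b)
        (Function.update y i0 a - Function.update y i0 b)
      rw [add_sub_cancel, hdiff, symm_single hf hfe] at h
      simp only [hg]
      linarith
    have h1' := hle s s'
    have h2' := hle s' s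
    rw [abs_sub_comm s' s] at h2'
    exact abs_sub_le_iff.mpr ⟨h1', h2'⟩
  have hupdate0 : Function.update y i0 0 = y := by rw [← hy0, Function.update_eq_self]
  have hg0 : g 0 ≤ 1 := by simp only [hg, hupdate0]; exact h1
  set S : ℝ := f y + 2 with hS
  have hS0 : (0 : ℝ) ≤ S := by have := hf.1 y; simp only [hS]; linarith
  have hgS : 1 ≤ g S := by
    have hsplit : Function.update y i0 S = y + Pi.single i0 S := by
      funext i
      by_cases hi : i = i0
      · subst hi; simp [hy0]
      · simp [Function.update_of_ne hi, Pi.single_apply, hi]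
    have htri : f (Pi.single i0 S) ≤ f (y + Pi.single i0 S) + f y := by
      have h := hf.2.2.2.1 (y + Pi.single i0 S) (-y)
      rw [symm_neg hf] at h
      simpa using h
    rw [symm_single hf hfe, abs_of_nonneg hS0] at htri
    show (1 : ℝ) ≤ f (Function.update y i0 S)
    rw [hsplit]
    have := hf.1 y
    simp only [hS] at htri ⊢
    linarith
  have hmem : (1 : ℝ) ∈ Set.Icc (g 0) (g S) := ⟨hg0, hgS⟩
  obtain ⟨s, _, hs⟩ := intermediate_value_Icc hS0 hlip.continuous.continuousOn hmem
  exact ⟨s, hs⟩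

end part2

section part3
variable {d : ℕ} {f : (Fin d → ℝ) → ℝ}

lemma symm_l1_lower' (hf : IsSymmNorm f) {l : ℕ} (hl0 : 0 < l) (hld : l ≤ d)
    (y : Fin d → ℝ) (hy : ∀ i : Fin d, ¬((i : ℕ) < l) → y i = 0) :
    lam f l * ∑ i, |y i| ≤ (l : ℝ) * f y := by
  obtain ⟨m, rfl⟩ : ∃ m, l = m + 1 := ⟨l - 1, by omega⟩
  have h := symm_l1_lower hf hld y hy
  push_cast
  exact h

end part3


/-- For symmetric norms `‖·‖_X`, `‖·‖_Y` on `ℝ^d` (`d ≥ 2`) with normalized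
standard basis vectors, and `k ≥ 2d + ⌈log₂ d⌉ − 1`,
`e_k(S_X, B_Y) ≥ (1/e) · 2^{−k/(d−1)} · λ_Y(d−1)/λ_X(d−1)`. -/
theorem entropy_symm_lower_large (d : ℕ) (hd : 2 ≤ d)
    (nX nY : (Fin d → ℝ) → ℝ) (hX : IsSymmNorm nX) (hY : IsSymmNorm nY)
    (hXe : ∀ i : Fin d, nX (Pi.single i 1) = 1)
    (hYe : ∀ i : Fin d, nY (Pi.single i 1) = 1)
    (k : ℕ) (hk : 2 * d + Nat.clog 2 d - 1 ≤ k) :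
    (1 / Real.exp 1) * 2 ^ (-(k : ℝ) / ((d : ℝ) - 1)) *
        (lam nY (d - 1) / lam nX (d - 1)) ≤
      entropyNumber {x | nX x = 1} {x | nY x ≤ 1} k := by
  classical
  set m : ℕ := d - 1 with hmdef
  have hdm : d = m + 1 := by omega
  have hm0 : 0 < m := by omega
  have hmd : m < d := by omega
  haveI : Nonempty (Fin m) := ⟨⟨0, hm0⟩⟩
  set a : ℝ := lam nX (d - 1) with hadef
  set b : ℝ := lam nY (d - 1) with hbdef
  have hla : 1 ≤ a := lam_ge_one hX hXe (by omega) (by omega)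
  have hlb : 1 ≤ b := lam_ge_one hY hYe (by omega) (by omega)
  have ha0 : 0 < a := lt_of_lt_of_le one_pos hla
  have hb0 : 0 < b := lt_of_lt_of_le one_pos hlb
  set N : ℕ := 2 ^ (k - 1) with hNdef
  have hN0 : 0 < N := Nat.pow_pos (by norm_num)
  have hNr0 : (0 : ℝ) < (N : ℝ) := by exact_mod_cast hN0
  -- the embedding of the first m coordinates
  set emb : Fin m → Fin d := fun t => ⟨t.1, lt_trans t.2 hmd⟩ with hembdef
  have hembinj : Function.Injective emb := by
    intro s t hst
    exact Fin.ext (congrArg (fun i : Fin d => (i : ℕ)) hst)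
  set i0 : Fin d := ⟨m, hmd⟩ with hi0def
  have hembne : ∀ t : Fin m, emb t ≠ i0 := by
    intro t h
    have := congrArg (fun i : Fin d => (i : ℕ)) h
    simp only [hembdef, hi0def] at this
    omega
  apply le_csInf
  · -- nonemptiness of the covering set
    refine ⟨(d : ℝ) + 1, by positivity, fun _ => 0, ?_⟩
    intro x hx
    have hx1 : nX x = 1 := hx
    refine Set.mem_iUnion.mpr ⟨⟨0, hN0⟩, ?_⟩
    rw [zero_vadd]
    refine Set.mem_smul_set.mpr ⟨((d : ℝ) + 1)⁻¹ • x, ?_, ?_⟩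
    · show nY (((d : ℝ) + 1)⁻¹ • x) ≤ 1
      rw [hY.2.2.1, abs_of_nonneg (by positivity)]
      have h1 : nY x ≤ ∑ i, |x i| := symm_le_sum_abs hY hYe x
      have h2 : ∑ i, |x i| ≤ ∑ _i : Fin d, (1 : ℝ) := by
        refine Finset.sum_le_sum fun i _ => ?_
        calc |x i| ≤ nX x := symm_coord_le hX hXe x i
          _ = 1 := hx1
      rw [Finset.sum_const, Finset.card_univ, Fintype.card_fin, nsmul_eq_mul, mul_one] at h2
      have hd0 : (0 : ℝ) < (d : ℝ) + 1 := by positivity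
      rw [inv_mul_le_iff₀ hd0]
      linarith
    · rw [smul_inv_smul₀ (by positivity)]
  · rintro ε ⟨hεpos, c, hc⟩
    show (1 / Real.exp 1) * 2 ^ (-(k : ℝ) / ((d : ℝ) - 1)) * (b / a) ≤ ε
    set r : ℝ := ε * m / b with hrdef
    have hr0 : 0 < r := by positivity
    -- Step A : covering of the cube by ℓ¹-balls in dimension m
    have cover : ∀ w : Fin m → ℝ, (∀ t, |w t| ≤ 1 / a) →
        ∃ j : Fin N, ∑ t, |w t - c j (emb t)| ≤ r := by
      intro w hw
      set y : Fin d → ℝ := fun i => if h : (i : ℕ) < m then w ⟨i.1, h⟩ else 0 with hydef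
      have hynX : nX y ≤ 1 := by
        have hmono : nX y ≤ nX ((1 / a) • (fun i : Fin d => if (i : ℕ) < m then (1 : ℝ) else 0)) := by
          apply symm_mono hX
          intro i
          by_cases h : (i : ℕ) < m
          · simp only [hydef, dif_pos h, Pi.smul_apply, smul_eq_mul, if_pos h, mul_one]
            rw [abs_of_nonneg (by positivity : (0:ℝ) ≤ 1 / a)]
            exact hw _
          · simp [hydef, dif_neg h, h]
        have heq : nX ((1 / a) • (fun i : Fin d => if (i : ℕ) < m then (1 : ℝ) else 0)) = 1 := by
          rw [hX.2.2.1, abs_of_nonneg (by positivity : (0:ℝ) ≤ 1 / a)]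
          have he2 : (fun i : Fin d => if (i : ℕ) < m then (1 : ℝ) else 0) =
              (fun i : Fin d => if (i : ℕ) < d - 1 then (1 : ℝ) else 0) := by
            funext i; rw [hmdef]
          rw [he2]
          show 1 / a * a = 1
          field_simp
        rw [heq] at hmono
        exact hmono
      have hyi0 : y i0 = 0 := by
        simp only [hydef, hi0def]
        rw [dif_neg (by simp)]
      obtain ⟨s, hs⟩ := exists_on_sphere hX hXe y i0 hyi0 hynX
      set x : Fin d → ℝ := Function.update y i0 s with hxdef
      have hxS : x ∈ {x | nX x = 1} := hs
      obtain ⟨j, hj⟩ := Set.mem_iUnion.mp (hc hxS)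
      obtain ⟨b', hb', hxcb⟩ := hj
      obtain ⟨v, hv, rfl⟩ := Set.mem_smul_set.mp hb'
      have hvcx : x - c j = ε • v := by
        rw [← hxcb]
        simp only [vadd_eq_add]
        abel
      have hnv : nY (x - c j) ≤ ε := by
        rw [hvcx, hY.2.2.1, abs_of_pos hεpos]
        have hv1 : nY v ≤ 1 := hv
        nlinarith [hY.1 v]
      set v0 : Fin d → ℝ := Function.update (x - c j) i0 0 with hv0def
      have hnv0 : nY v0 ≤ ε :=
        le_trans (symm_update_le hY _ i0 0 (by simp)) hnv
      have hv0z : ∀ i : Fin d, ¬((i : ℕ) < m) → v0 i = 0 := by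
        intro i h
        have hii0 : i = i0 := by
          apply Fin.ext
          have := i.2
          simp only [hi0def]
          omega
        rw [hii0, hv0def, Function.update_self]
      have hL1 : b * ∑ i, |v0 i| ≤ (m : ℝ) * nY v0 := by
        have hh := symm_l1_lower' hY hm0 (le_of_lt hmd) v0 hv0z
        have hlam : lam nY m = b := by rw [hbdef, hmdef]
        rwa [hlam] at hh
      have hsum2 : ∑ t : Fin m, |w t - c j (emb t)| ≤ ∑ i, |v0 i| := by
        have heq : ∀ t : Fin m, w t - c j (emb t) = v0 (emb t) := by
          intro t
          rw [hv0def, Function.update_of_ne (hembne t)]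
          have hxe : x (emb t) = w t := by
            rw [hxdef, Function.update_of_ne (hembne t), hydef]
            exact dif_pos t.2
          simp only [Pi.sub_apply, hxe]
        calc ∑ t : Fin m, |w t - c j (emb t)| = ∑ t : Fin m, |v0 (emb t)| :=
              Finset.sum_congr rfl fun t _ => by rw [heq t]
          _ = ∑ i ∈ Finset.univ.image emb, |v0 i| :=
              (Finset.sum_image (f := fun i : Fin d => |v0 i|) (g := emb)
                (s := Finset.univ) (fun s _ t _ h => hembinj h)).symm
          _ ≤ ∑ i, |v0 i| :=
              Finset.sum_le_sum_of_subset_of_nonneg (Finset.subset_univ _)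
                (fun i _ _ => abs_nonneg _)
      refine ⟨j, le_trans hsum2 ?_⟩
      rw [hrdef, le_div_iff₀ hb0]
      have hmnn : (0 : ℝ) ≤ (m : ℝ) := Nat.cast_nonneg m
      nlinarith [hL1, mul_le_mul_of_nonneg_left hnv0 hmnn]
    -- Step B : volumes
    set A : Set (Fin m → ℝ) := Set.pi Set.univ (fun _ => Set.Icc (-(1 / a)) (1 / a)) with hAdef
    set Q : Set (Fin m → ℝ) := {w | ∑ t, |w t| ≤ r} with hQdef
    have hAsub : A ⊆ ⋃ j : Fin N, ((fun t => c j (emb t)) +ᵥ Q) := by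
      intro w hw
      have hw' : ∀ t, |w t| ≤ 1 / a := by
        intro t
        have := hw t (Set.mem_univ t)
        exact abs_le.mpr ⟨this.1, this.2⟩
      obtain ⟨j, hj⟩ := cover w hw'
      refine Set.mem_iUnion.mpr ⟨j, ?_⟩
      refine Set.mem_vadd_set.mpr ⟨w - (fun t => c j (emb t)), hj, ?_⟩
      simp only [vadd_eq_add]
      abel
    have hvolA : MeasureTheory.volume A = (ENNReal.ofReal (2 / a)) ^ m := by
      rw [hAdef, MeasureTheory.volume_pi_pi]
      simp only [Real.volume_Icc]
      rw [Finset.prod_const, Finset.card_univ, Fintype.card_fin]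
      congr 1
      congr 1
      ring
    have hvolQ : MeasureTheory.volume Q =
        ENNReal.ofReal r ^ m * ENNReal.ofReal (2 ^ m / (m.factorial : ℝ)) := by
      have h := MeasureTheory.volume_sum_rpow_le (Fin m) (le_refl (1 : ℝ)) r
      simp only [Real.rpow_one, one_div_one, Fintype.card_fin] at h
      rw [show ((1:ℝ) + 1) = 2 by norm_num, Real.Gamma_two, mul_one,
        show ((m : ℝ) / 1 + 1) = (m : ℝ) + 1 by ring, Real.Gamma_nat_eq_factorial] at h
      rw [hQdef]
      exact h
    -- translation invariance and the covering bound
    have hchain : (ENNReal.ofReal (2 / a)) ^ m ≤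
        (N : ENNReal) * (ENNReal.ofReal r ^ m * ENNReal.ofReal (2 ^ m / (m.factorial : ℝ))) := by
      rw [← hvolA, ← hvolQ]
      calc MeasureTheory.volume A
          ≤ MeasureTheory.volume (⋃ j : Fin N, ((fun t => c j (emb t)) +ᵥ Q)) :=
            MeasureTheory.measure_mono hAsub
        _ ≤ ∑' j : Fin N, MeasureTheory.volume ((fun t => c j (emb t)) +ᵥ Q) :=
            MeasureTheory.measure_iUnion_le _
        _ = ∑' _j : Fin N, MeasureTheory.volume Q := by
            congr 1
            funext j
            exact MeasureTheory.measure_vadd _ _ _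
        _ = (N : ENNReal) * MeasureTheory.volume Q := by
            rw [tsum_fintype, Finset.sum_const, Finset.card_univ, Fintype.card_fin,
              nsmul_eq_mul]
    -- convert to a real inequality
    have hfact0 : (0 : ℝ) < (m.factorial : ℝ) := by exact_mod_cast m.factorial_pos
    have hreal : (2 / a) ^ m ≤ (N : ℝ) * (r ^ m * (2 ^ m / (m.factorial : ℝ))) := by
      have h2a : (0 : ℝ) ≤ 2 / a := by positivity
      have hterm : (0 : ℝ) ≤ r ^ m * (2 ^ m / (m.factorial : ℝ)) := by positivity
      rw [← ENNReal.ofReal_pow h2a, ← ENNReal.ofReal_pow (le_of_lt hr0),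
        ← ENNReal.ofReal_mul (by positivity), ← ENNReal.ofReal_natCast N,
        ← ENNReal.ofReal_mul (by positivity)] at hchain
      exact (ENNReal.ofReal_le_ofReal_iff (by positivity)).mp hchain
    -- factorial lower bound : m^m ≤ e^m * m!
    have hfact : (m : ℝ) ^ m ≤ Real.exp 1 ^ m * (m.factorial : ℝ) := by
      have hterm : (m : ℝ) ^ m / (m.factorial : ℝ) ≤ Real.exp m := by
        refine le_trans ?_ (Real.sum_le_exp_of_nonneg (Nat.cast_nonneg m) (m + 1))
        exact Finset.single_le_sum (f := fun i => (m : ℝ) ^ i / (i.factorial : ℝ))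
          (fun i _ => by positivity) (Finset.self_mem_range_succ m)
      have hexp : Real.exp (m : ℝ) = Real.exp 1 ^ m := by
        rw [← Real.exp_nat_mul, mul_one]
      rw [hexp, div_le_iff₀ hfact0] at hterm
      exact hterm
    -- core inequality : (b / (e * a))^m ≤ N * ε^m
    have he1 : (0 : ℝ) < Real.exp 1 := Real.exp_pos 1
    have hM0 : (0 : ℝ) < (m : ℝ) := by exact_mod_cast hm0
    have key : (b / (Real.exp 1 * a)) ^ m ≤ (N : ℝ) * ε ^ m := by
      have h1 : b ^ m * (m.factorial : ℝ) ≤ (N : ℝ) * ε ^ m * (m : ℝ) ^ m * a ^ m := by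
        rw [hrdef] at hreal
        rw [div_pow, div_pow] at hreal
        have h2 := mul_le_mul_of_nonneg_right hreal
          (by positivity : (0 : ℝ) ≤ a ^ m * b ^ m * (m.factorial : ℝ) / 2 ^ m)
        have h2m : (0 : ℝ) < (2 : ℝ) ^ m := by positivity
        have ham : (0 : ℝ) < a ^ m := by positivity
        have hbm : (0 : ℝ) < b ^ m := by positivity
        calc b ^ m * (m.factorial : ℝ)
            = 2 ^ m / a ^ m * (a ^ m * b ^ m * (m.factorial : ℝ) / 2 ^ m) := by
              field_simp
          _ ≤ (N : ℝ) * ((ε * (m : ℝ)) ^ m / b ^ m * (2 ^ m / (m.factorial : ℝ))) *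
              (a ^ m * b ^ m * (m.factorial : ℝ) / 2 ^ m) := h2
          _ = (N : ℝ) * ε ^ m * (m : ℝ) ^ m * a ^ m := by
              rw [mul_pow]
              field_simp
      have h3 : (N : ℝ) * ε ^ m * (m : ℝ) ^ m * a ^ m ≤
          (N : ℝ) * ε ^ m * (Real.exp 1 ^ m * (m.factorial : ℝ)) * a ^ m := by
        have := mul_le_mul_of_nonneg_left hfact
          (by positivity : (0 : ℝ) ≤ (N : ℝ) * ε ^ m)
        have ham : (0 : ℝ) ≤ a ^ m := by positivity
        calc (N : ℝ) * ε ^ m * (m : ℝ) ^ m * a ^ m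
            = ((N : ℝ) * ε ^ m * (m : ℝ) ^ m) * a ^ m := by ring
          _ ≤ ((N : ℝ) * ε ^ m * (Real.exp 1 ^ m * (m.factorial : ℝ))) * a ^ m :=
              mul_le_mul_of_nonneg_right this ham
          _ = (N : ℝ) * ε ^ m * (Real.exp 1 ^ m * (m.factorial : ℝ)) * a ^ m := by ring
      have h4 : b ^ m ≤ (N : ℝ) * ε ^ m * Real.exp 1 ^ m * a ^ m := by
        have h5 := le_trans h1 h3
        have := (mul_le_mul_iff_of_pos_right hfact0).mp
          (by calc b ^ m * (m.factorial : ℝ)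
                ≤ (N : ℝ) * ε ^ m * (Real.exp 1 ^ m * (m.factorial : ℝ)) * a ^ m := h5
              _ = ((N : ℝ) * ε ^ m * Real.exp 1 ^ m * a ^ m) * (m.factorial : ℝ) := by ring)
        exact this
      rw [div_pow, mul_pow]
      rw [div_le_iff₀ (by positivity : (0 : ℝ) < Real.exp 1 ^ m * a ^ m)]
      calc b ^ m ≤ (N : ℝ) * ε ^ m * Real.exp 1 ^ m * a ^ m := h4
        _ = (N : ℝ) * ε ^ m * (Real.exp 1 ^ m * a ^ m) := by ring
    -- final arithmetic
    have hd1m : ((d : ℝ) - 1) = (m : ℝ) := by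
      rw [hdm]
      push_cast
      ring
    set t : ℝ := (2 : ℝ) ^ (-(k : ℝ) / ((d : ℝ) - 1)) with htdef
    have ht0 : 0 < t := Real.rpow_pos_of_pos (by norm_num) _
    have htm : t ^ m ≤ 1 / (N : ℝ) := by
      have htm1 : t ^ m = (2 : ℝ) ^ (-(k : ℝ)) := by
        rw [htdef, hd1m, ← Real.rpow_natCast ((2:ℝ) ^ (-(k : ℝ) / (m : ℝ))) m,
          ← Real.rpow_mul (by norm_num : (0:ℝ) ≤ 2)]
        congr 1
        field_simp
      have htm2 : (2 : ℝ) ^ (-(k : ℝ)) ≤ (2 : ℝ) ^ (-((k - 1 : ℕ) : ℝ)) := by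
        apply Real.rpow_le_rpow_of_exponent_le (by norm_num)
        have : ((k - 1 : ℕ) : ℝ) ≤ (k : ℝ) := by exact_mod_cast Nat.sub_le k 1
        linarith
      have htm3 : (2 : ℝ) ^ (-((k - 1 : ℕ) : ℝ)) = 1 / (N : ℝ) := by
        rw [Real.rpow_neg (by norm_num : (0:ℝ) ≤ 2), Real.rpow_natCast, one_div, hNdef]
        norm_num
      rw [htm1]
      rw [← htm3]
      exact htm2
    have hLm : ((1 / Real.exp 1) * t * (b / a)) ^ m ≤ ε ^ m := by
      have hbae : (0 : ℝ) ≤ (1 / Real.exp 1) * (b / a) := by positivity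
      have step1 : ((1 / Real.exp 1) * t * (b / a)) ^ m =
          (b / (Real.exp 1 * a)) ^ m * t ^ m := by
        rw [← mul_pow]
        congr 1
        field_simp
      rw [step1]
      have step2 : (b / (Real.exp 1 * a)) ^ m * t ^ m ≤
          (b / (Real.exp 1 * a)) ^ m * (1 / (N : ℝ)) :=
        mul_le_mul_of_nonneg_left htm (by positivity)
      refine le_trans step2 ?_
      rw [mul_one_div, div_le_iff₀ hNr0]
      calc (b / (Real.exp 1 * a)) ^ m ≤ (N : ℝ) * ε ^ m := key
        _ = ε ^ m * (N : ℝ) := by ring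
    exact le_of_pow_le_pow_left₀ (by omega) (le_of_lt hεpos) hLm
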